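/- Let U in SpSt(2n,2k) and Δ in R^{2n×2k} with U^+Δ = -Δ^+U. Define Ω̄ := Δ(U^TU)^{-1}U^T + J_{2n}U(U^TU)^{-1}Δ^T(I_{2n} - J_{2n}^TU(U^TU)^{-1}U^TJ_{2n})J_{2n}. Then Ω̄ is Hamiltonian (Ω̄^+ = -Ω̄) and Ω̄ U = Δ. -/

import Mathlib

open Matrix

noncomputable section

/-- The standard symplectic matrix `J = [[0, I],[-I, 0]]` of size `2m`. -/
def Jmat (m : ℕ) : Matrix (Fin m ⊕ Fin m) (Fin m ⊕ Fin m) ℝ :=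
  Matrix.fromBlocks 0 1 (-1) 0

/-- The symplectic inverse `A⁺ = J₂ₖᵀ Aᵀ J₂ₙ` of a `2n × 2k` real matrix. -/
def sympInv {n k : ℕ} (A : Matrix (Fin n ⊕ Fin n) (Fin k ⊕ Fin k) ℝ) :
    Matrix (Fin k ⊕ Fin k) (Fin n ⊕ Fin n) ℝ :=
  (Jmat k)ᵀ * Aᵀ * Jmat n

lemma Jmat_transpose' (m : ℕ) : (Jmat m)ᵀ = -Jmat m := by
  simp [Jmat, fromBlocks_transpose, fromBlocks_neg]

lemma Jmat_mul_Jmat' (m : ℕ) : Jmat m * Jmat m = -1 := by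
  simp [Jmat, fromBlocks_multiply, fromBlocks_neg, ← fromBlocks_one]

set_option maxHeartbeats 1600000 in
theorem stmt_15 (n k : ℕ) (U Δ : Matrix (Fin n ⊕ Fin n) (Fin k ⊕ Fin k) ℝ)
    (hU : sympInv U * U = 1) (hΔ : sympInv U * Δ = -(sympInv Δ * U))
    (Ω : Matrix (Fin n ⊕ Fin n) (Fin n ⊕ Fin n) ℝ)
    (hΩ : Ω = Δ * (Uᵀ * U)⁻¹ * Uᵀ
        + Jmat n * U * (Uᵀ * U)⁻¹ * Δᵀ
          * (1 - (Jmat n)ᵀ * U * (Uᵀ * U)⁻¹ * Uᵀ * Jmat n) * Jmat n) :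
    sympInv Ω = -Ω ∧ Ω * U = Δ := by
  -- invertibility of UᵀU
  have hinj : ∀ x : (Fin k ⊕ Fin k) → ℝ, U *ᵥ x = 0 → x = 0 := by
    intro x hx
    have h := congrArg (fun M => M *ᵥ x) hU
    simp only [← mulVec_mulVec, hx, mulVec_zero, one_mulVec] at h
    exact h.symm
  have hPD : (Uᵀ * U).PosDef := by
    refine posDef_iff_dotProduct_mulVec.mpr ⟨by simpa using isHermitian_conjTranspose_mul_self U, fun x hx => ?_⟩
    have h0 : U *ᵥ x ≠ 0 := fun h => hx (hinj x h)
    have heq : star x ⬝ᵥ ((Uᵀ * U) *ᵥ x) = star (U *ᵥ x) ⬝ᵥ (U *ᵥ x) := by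
      rw [← mulVec_mulVec, dotProduct_mulVec]
      congr 1
      rw [show Uᵀ = Uᴴ by simp, vecMul_conjTranspose, star_star]
    rw [heq]
    exact dotProduct_star_self_pos_iff.mpr h0
  have hUnit : IsUnit (Uᵀ * U).det := (Matrix.isUnit_iff_isUnit_det _).mp hPD.isUnit
  set J := Jmat n with hJ
  set K := Jmat k with hK
  set G := (Uᵀ * U)⁻¹ with hGdef
  have hG1 : G * (Uᵀ * U) = 1 := Matrix.nonsing_inv_mul _ hUnit
  have hG2 : (Uᵀ * U) * G = 1 := Matrix.mul_nonsing_inv _ hUnit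
  have hGT : Gᵀ = G := by
    rw [hGdef, Matrix.transpose_nonsing_inv, Matrix.transpose_mul, transpose_transpose]
  have hJT : Jᵀ = -J := Jmat_transpose' n
  have hKT : Kᵀ = -K := Jmat_transpose' k
  have hJJ : J * J = -1 := Jmat_mul_Jmat' n
  have hKK : K * K = -1 := Jmat_mul_Jmat' k
  have hKKT : K * Kᵀ = 1 := by rw [hKT, mul_neg, hKK, neg_neg]
  -- rewrite hU, hΔ
  have hUJU : Uᵀ * (J * U) = K := by
    have h := congrArg (fun M => K * M) hU
    simp only [sympInv, ← hJ, ← hK, Matrix.mul_one] at h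
    rw [← Matrix.mul_assoc, ← Matrix.mul_assoc, ← Matrix.mul_assoc, hKKT, Matrix.one_mul] at h
    rw [← Matrix.mul_assoc, h]
  have hSkew : Δᵀ * (J * U) = -(Uᵀ * (J * Δ)) := by
    have h := congrArg (fun M => K * M) hΔ
    simp only [sympInv, Matrix.mul_neg] at h
    rw [← hJ, ← hK] at h
    rw [← Matrix.mul_assoc, ← Matrix.mul_assoc, ← Matrix.mul_assoc, hKKT, Matrix.one_mul] at h
    rw [show K * ((K)ᵀ * Δᵀ * J * U) = K * Kᵀ * (Δᵀ * (J * U)) by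
      simp only [Matrix.mul_assoc], hKKT, Matrix.one_mul] at h
    rw [← Matrix.mul_assoc, ← Matrix.mul_assoc, h, ← Matrix.mul_assoc, neg_neg]
  -- trailing-form rewriting rules
  have rGUU : ∀ {p : Type} (X : Matrix (Fin k ⊕ Fin k) p ℝ),
      G * (Uᵀ * (U * X)) = X := by
    intro p X
    rw [show G * (Uᵀ * (U * X)) = (G * (Uᵀ * U)) * X by simp only [Matrix.mul_assoc],
      hG1, Matrix.one_mul]
  have rGUU' : G * (Uᵀ * U) = 1 := hG1
  have rJJ : ∀ {p : Type} (X : Matrix (Fin n ⊕ Fin n) p ℝ),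
      J * (J * X) = -X := by
    intro p X
    rw [← Matrix.mul_assoc, hJJ, Matrix.neg_mul, Matrix.one_mul]
  have rUJU : ∀ {p : Type} (X : Matrix (Fin k ⊕ Fin k) p ℝ),
      Uᵀ * (J * (U * X)) = K * X := by
    intro p X
    rw [show Uᵀ * (J * (U * X)) = Uᵀ * (J * U) * X by simp only [Matrix.mul_assoc], hUJU]
  have rDJU : ∀ {p : Type} (X : Matrix (Fin k ⊕ Fin k) p ℝ),
      Δᵀ * (J * (U * X)) = -(Uᵀ * (J * (Δ * X))) := by
    intro p X
    rw [show Δᵀ * (J * (U * X)) = Δᵀ * (J * U) * X by simp only [Matrix.mul_assoc], hSkew]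
    simp only [Matrix.neg_mul, Matrix.mul_assoc]
  have hDJU : Δᵀ * (J * U) = -(Uᵀ * (J * Δ)) := hSkew
  constructor
  · subst hΩ
    simp only [sympInv, ← hJ, ← hGdef, transpose_add, transpose_mul, transpose_sub,
      transpose_one, transpose_transpose, transpose_smul, transpose_neg, hGT, hJT,
      neg_smul, one_smul, smul_neg, Matrix.mul_add, Matrix.add_mul,
      Matrix.mul_sub, Matrix.sub_mul, Matrix.mul_one, Matrix.one_mul, Matrix.mul_neg,
      Matrix.neg_mul, neg_neg, neg_add, neg_sub, Matrix.mul_assoc, rGUU, rGUU', rJJ, hJJ,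
      rUJU, hUJU, rDJU, hDJU]
    abel
  · subst hΩ
    simp only [← hJ, ← hGdef, Matrix.mul_add, Matrix.add_mul, Matrix.mul_sub, Matrix.sub_mul,
      Matrix.mul_one, Matrix.one_mul, Matrix.mul_neg, Matrix.neg_mul, neg_neg, hJT,
      Matrix.mul_assoc, rGUU, rGUU', rJJ, hJJ, rUJU, hUJU, rDJU, hDJU]
    abel
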